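/- arXiv:2312.12218 — 3 statements merged into one kernel-verified Lean document; each statement's English description precedes it below -/
import Mathlib

section
/- For n ≥ 4, the derivative of the generalized Jacobi polynomial P_n^{(-2,-2)}(ξ) = ((ξ²−1)/4)²·P_{n−4}^{(2,2)}(ξ) satisfies d/dξ P_n^{(-2,-2)}(ξ) = ((n−3)/2)·P_{n−1}^{(-1,-1)}(ξ). -/
open scoped BigOperators

/-- Classical Jacobi polynomial `P_n^{(a,b)}` with nonnegative integer parameters. -/
noncomputable def jacobiP (a b n : ℕ) (x : ℝ) : ℝ :=
  ∑ s ∈ Finset.range (n + 1),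
    (Nat.choose (n + a) (n - s) : ℝ) * (Nat.choose (n + b) s : ℝ) *
      ((x - 1) / 2) ^ s * ((x + 1) / 2) ^ (n - s)

/-- Legendre polynomial `L_n = P_n^{(0,0)}`. -/
noncomputable def legendreP (n : ℕ) (x : ℝ) : ℝ := jacobiP 0 0 n x

/-- Generalized Jacobi polynomial `P_n^{(-1,-1)}(ξ) = ((ξ²−1)/4)·P_{n−2}^{(1,1)}(ξ)` for `n ≥ 2`. -/
noncomputable def gJacobiM1 (n : ℕ) (x : ℝ) : ℝ := ((x ^ 2 - 1) / 4) * jacobiP 1 1 (n - 2) x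

/-- Generalized Jacobi polynomial `P_n^{(-2,-2)}(ξ) = ((ξ²−1)/4)²·P_{n−4}^{(2,2)}(ξ)` for `n ≥ 4`. -/
noncomputable def gJacobiM2 (n : ℕ) (x : ℝ) : ℝ := ((x ^ 2 - 1) / 4) ^ 2 * jacobiP 2 2 (n - 4) x

/-- `ψ_m(ξ) = (√(2(2m−1))/(m−1))·P_m^{(-1,-1)}(ξ)` for `m ≥ 2`. -/
noncomputable def psiF (m : ℕ) (x : ℝ) : ℝ :=
  (Real.sqrt (2 * (2 * (m : ℝ) - 1)) / ((m : ℝ) - 1)) * gJacobiM1 m x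

/-- `φ_n(ξ) = √((2n+1)/2)·L_n(ξ)`. -/
noncomputable def phiF (n : ℕ) (x : ℝ) : ℝ :=
  Real.sqrt ((2 * (n : ℝ) + 1) / 2) * legendreP n x

/-- `φ̃_m(ξ) = (√(8(2m−3))/((m−3)(m−2)))·P_m^{(-2,-2)}(ξ)` for `m ≥ 4`. -/
noncomputable def varphiF (m : ℕ) (x : ℝ) : ℝ :=
  (Real.sqrt (8 * (2 * (m : ℝ) - 3)) / (((m : ℝ) - 3) * ((m : ℝ) - 2))) * gJacobiM2 m x

private noncomputable def gjAuxP (k : ℕ) (U V : ℝ) (s : ℕ) : ℝ :=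
  ((k + 2).choose (k - s) : ℝ) * ((k + 2).choose s : ℝ) * (((k - s : ℕ) : ℝ) / 2 + 1)
    * U ^ (s + 1) * V ^ (k - s)

private noncomputable def gjAuxQ (k : ℕ) (U V : ℝ) (s : ℕ) : ℝ :=
  ((k + 2).choose (k - s) : ℝ) * ((k + 2).choose s : ℝ) * ((s : ℝ) / 2 + 1)
    * U ^ s * V ^ (k + 1 - s)

private noncomputable def gjAuxB (k : ℕ) (U V : ℝ) (s : ℕ) : ℝ :=
  (((k : ℝ) + 1) / 2) * (((k + 2).choose (k + 1 - s) : ℝ) * ((k + 2).choose s : ℝ)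
    * U ^ s * V ^ (k + 1 - s))

private lemma gj_factA (k s : ℕ) : (k + 2).choose (s + 1) * (s + 1) = (k + 2).choose s * (k + 2 - s) :=
  Nat.choose_succ_right_eq (k + 2) s

private lemma gj_factB (k s : ℕ) (hs : s < k) :
    (k + 2).choose (k - s - 1) * (s + 3) = (k + 2).choose (k - s) * (k - s) := by
  obtain ⟨m, hm⟩ : ∃ m, k - s = m + 1 := ⟨k - s - 1, by omega⟩
  rw [hm]
  simp only [Nat.add_sub_cancel]
  rw [Nat.choose_succ_right_eq]
  have h2 : k + 2 - m = s + 3 := by omega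
  rw [h2]

private lemma gj_factC (k : ℕ) : (k + 2).choose (k + 1) * (k + 1) = (k + 2).choose k * 2 := by
  have := Nat.choose_succ_right_eq (k + 2) k
  have h2 : k + 2 - k = 2 := by omega
  rw [h2] at this
  exact this

private lemma gj_PQ_eq_B (k : ℕ) (U V : ℝ) (s : ℕ) (hs : s < k) :
    gjAuxP k U V s + gjAuxQ k U V (s + 1) = gjAuxB k U V (s + 1) := by
  unfold gjAuxP gjAuxQ gjAuxB
  have h1 : k + 1 - (s + 1) = k - s := by omega
  have h2 : k - (s + 1) = k - s - 1 := by omega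
  rw [h1, h2]
  have hA : (((k + 2).choose (s + 1) : ℝ)) * ((s : ℝ) + 1)
      = ((k + 2).choose s : ℝ) * ((k : ℝ) - (s : ℝ) + 2) := by
    have := gj_factA k s
    have hc : ((k + 2 - s : ℕ) : ℝ) = (k : ℝ) - (s : ℝ) + 2 := by
      have : ((k + 2 - s : ℕ) : ℝ) = ((k + 2 : ℕ) : ℝ) - (s : ℝ) :=
        by exact_mod_cast Nat.cast_sub (by omega)
      rw [this]; push_cast; ring
    calc (((k + 2).choose (s + 1) : ℝ)) * ((s : ℝ) + 1)
        = (((k + 2).choose (s + 1) * (s + 1) : ℕ) : ℝ) := by push_cast; ring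
      _ = (((k + 2).choose s * (k + 2 - s) : ℕ) : ℝ) := by rw [this]
      _ = ((k + 2).choose s : ℝ) * ((k : ℝ) - (s : ℝ) + 2) := by
          push_cast [Nat.cast_sub (show s ≤ k + 2 by omega)]; ring
  have hB : (((k + 2).choose (k - s - 1) : ℝ)) * ((s : ℝ) + 3)
      = ((k + 2).choose (k - s) : ℝ) * ((k : ℝ) - (s : ℝ)) := by
    have h := gj_factB k s hs
    calc (((k + 2).choose (k - s - 1) : ℝ)) * ((s : ℝ) + 3)
        = (((k + 2).choose (k - s - 1) * (s + 3) : ℕ) : ℝ) := by push_cast; ring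
      _ = (((k + 2).choose (k - s) * (k - s) : ℕ) : ℝ) := by rw [h]
      _ = ((k + 2).choose (k - s) : ℝ) * ((k : ℝ) - (s : ℝ)) := by
          push_cast [Nat.cast_sub (show s ≤ k by omega)]; ring
  have hcast : ((k - s : ℕ) : ℝ) = (k : ℝ) - (s : ℝ) :=
    Nat.cast_sub (by omega)
  rw [hcast]
  push_cast
  linear_combination (((k + 2).choose (k - s) : ℝ) * U ^ (s + 1) * V ^ (k - s) / 2) * hA.symm
    + (((k + 2).choose (s + 1) : ℝ) * U ^ (s + 1) * V ^ (k - s) / 2) * hB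

private lemma gj_Q0 (k : ℕ) (U V : ℝ) : gjAuxQ k U V 0 = gjAuxB k U V 0 := by
  unfold gjAuxQ gjAuxB
  simp only [Nat.sub_zero, Nat.choose_zero_right, Nat.cast_one, Nat.cast_zero, pow_zero]
  have h := gj_factC k
  have h' : ((k + 2).choose (k + 1) : ℝ) * ((k : ℝ) + 1) = ((k + 2).choose k : ℝ) * 2 := by
    exact_mod_cast congrArg (Nat.cast : ℕ → ℝ) h
  linear_combination (-(V ^ (k + 1)) / 2) * h'

private lemma gj_Pk (k : ℕ) (U V : ℝ) : gjAuxP k U V k = gjAuxB k U V (k + 1) := by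
  unfold gjAuxP gjAuxB
  simp only [Nat.sub_self, Nat.choose_zero_right, Nat.cast_one, Nat.cast_zero, pow_zero,
    Nat.add_sub_cancel]
  have h' : ((k + 2).choose (k + 1) : ℝ) * ((k : ℝ) + 1) = ((k + 2).choose k : ℝ) * 2 := by
    exact_mod_cast congrArg (Nat.cast : ℕ → ℝ) (gj_factC k)
  linear_combination (-(U ^ (k + 1)) / 2) * h'

private lemma gj_key' (k : ℕ) (U V : ℝ) :
    (U + V) * (∑ s ∈ Finset.range (k + 1),
        ((k + 2).choose (k - s) : ℝ) * ((k + 2).choose s : ℝ) * U ^ s * V ^ (k - s))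
      + (U * V) * (∑ s ∈ Finset.range (k + 1),
          ((k + 2).choose (k - s) : ℝ) * ((k + 2).choose s : ℝ) *
            ((s : ℝ) / 2 * U ^ (s - 1) * V ^ (k - s)
              + ((k - s : ℕ) : ℝ) / 2 * U ^ s * V ^ (k - s - 1)))
    = (((k : ℝ) + 1) / 2) * (∑ s ∈ Finset.range (k + 2),
        ((k + 2).choose (k + 1 - s) : ℝ) * ((k + 2).choose s : ℝ) * U ^ s * V ^ (k + 1 - s)) := by
  have lhs_eq : (U + V) * (∑ s ∈ Finset.range (k + 1),
        ((k + 2).choose (k - s) : ℝ) * ((k + 2).choose s : ℝ) * U ^ s * V ^ (k - s))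
      + (U * V) * (∑ s ∈ Finset.range (k + 1),
          ((k + 2).choose (k - s) : ℝ) * ((k + 2).choose s : ℝ) *
            ((s : ℝ) / 2 * U ^ (s - 1) * V ^ (k - s)
              + ((k - s : ℕ) : ℝ) / 2 * U ^ s * V ^ (k - s - 1)))
      = ∑ s ∈ Finset.range (k + 1), (gjAuxP k U V s + gjAuxQ k U V s) := by
    rw [Finset.mul_sum, Finset.mul_sum, ← Finset.sum_add_distrib]
    apply Finset.sum_congr rfl
    intro s hs
    simp only [Finset.mem_range] at hs
    have hsk : s ≤ k := by omega
    have e1 : U * V * ((s : ℝ) / 2 * U ^ (s - 1) * V ^ (k - s))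
        = (s : ℝ) / 2 * (U ^ s * V ^ (k - s) * V) := by
      cases s with
      | zero => simp
      | succ t =>
        simp only [Nat.add_sub_cancel]
        rw [pow_succ]
        ring
    have e2 : U * V * (((k - s : ℕ) : ℝ) / 2 * U ^ s * V ^ (k - s - 1))
        = ((k - s : ℕ) : ℝ) / 2 * (U ^ s * U * V ^ (k - s)) := by
      rcases Nat.eq_or_lt_of_le hsk with h | h
      · rw [← h]; simp
      · obtain ⟨m, hm⟩ : ∃ m, k - s = m + 1 := ⟨k - s - 1, by omega⟩
        rw [hm]
        simp only [Nat.add_sub_cancel]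
        rw [pow_succ]
        ring
    have hE : k + 1 - s = (k - s) + 1 := by omega
    unfold gjAuxP gjAuxQ
    rw [hE, pow_succ, pow_succ]
    linear_combination ((((k + 2).choose (k - s) : ℝ)) * (((k + 2).choose s : ℝ))) * e1
      + ((((k + 2).choose (k - s) : ℝ)) * (((k + 2).choose s : ℝ))) * e2
  rw [lhs_eq, Finset.mul_sum]
  have rhs_eq : ∀ s, (((k : ℝ) + 1) / 2) *
      (((k + 2).choose (k + 1 - s) : ℝ) * ((k + 2).choose s : ℝ) * U ^ s * V ^ (k + 1 - s))
      = gjAuxB k U V s := by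
    intro s; unfold gjAuxB; ring
  rw [Finset.sum_congr rfl (fun s _ => rhs_eq s)]
  rw [Finset.sum_add_distrib]
  rw [Finset.sum_range_succ (fun s => gjAuxP k U V s) k]
  rw [Finset.sum_range_succ' (fun s => gjAuxQ k U V s) k]
  rw [Finset.sum_range_succ' (fun s => gjAuxB k U V s) (k + 1)]
  rw [Finset.sum_range_succ (fun s => gjAuxB k U V (s + 1)) k]
  have hmid : ∑ s ∈ Finset.range k, gjAuxP k U V s + ∑ s ∈ Finset.range k, gjAuxQ k U V (s + 1)
      = ∑ s ∈ Finset.range k, gjAuxB k U V (s + 1) := by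
    rw [← Finset.sum_add_distrib]
    apply Finset.sum_congr rfl
    intro s hs
    simp only [Finset.mem_range] at hs
    exact gj_PQ_eq_B k U V s hs
  rw [gj_Q0, gj_Pk]
  linarith [hmid]


private lemma gj_term_hasDerivAt (K : ℝ) (s m : ℕ) (x : ℝ) :
    HasDerivAt (fun y : ℝ => K * ((y - 1) / 2) ^ s * ((y + 1) / 2) ^ m)
      (K * ((s : ℝ) / 2 * ((x - 1) / 2) ^ (s - 1) * ((x + 1) / 2) ^ m
        + (m : ℝ) / 2 * ((x - 1) / 2) ^ s * ((x + 1) / 2) ^ (m - 1))) x := by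
  have h1 : HasDerivAt (fun y : ℝ => (y - 1) / 2) (1 / 2) x := by
    simpa using ((hasDerivAt_id x).sub_const 1).div_const 2
  have h2 : HasDerivAt (fun y : ℝ => (y + 1) / 2) (1 / 2) x := by
    simpa using ((hasDerivAt_id x).add_const 1).div_const 2
  have h := ((h1.fun_pow s).fun_mul (h2.fun_pow m)).const_mul K
  have hf : (fun y : ℝ => K * ((y - 1) / 2) ^ s * ((y + 1) / 2) ^ m)
      = fun y : ℝ => K * (((y - 1) / 2) ^ s * ((y + 1) / 2) ^ m) := by
    funext y; ring
  rw [hf]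
  exact h.congr_deriv (by ring)

private lemma gj_hasDerivAt_jacobiP (a b n : ℕ) (x : ℝ) :
    HasDerivAt (fun y : ℝ => jacobiP a b n y)
      (∑ s ∈ Finset.range (n + 1),
        (Nat.choose (n + a) (n - s) : ℝ) * (Nat.choose (n + b) s : ℝ) *
          ((s : ℝ) / 2 * ((x - 1) / 2) ^ (s - 1) * ((x + 1) / 2) ^ (n - s)
            + ((n - s : ℕ) : ℝ) / 2 * ((x - 1) / 2) ^ s * ((x + 1) / 2) ^ (n - s - 1))) x := by
  unfold jacobiP
  apply HasDerivAt.fun_sum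
  intro s hs
  exact gj_term_hasDerivAt ((Nat.choose (n + a) (n - s) : ℝ) * (Nat.choose (n + b) s : ℝ)) s
    (n - s) x

private lemma gj_key (k : ℕ) (x : ℝ) :
    x * jacobiP 2 2 k x
      + ((x ^ 2 - 1) / 4) * (∑ s ∈ Finset.range (k + 1),
          (Nat.choose (k + 2) (k - s) : ℝ) * (Nat.choose (k + 2) s : ℝ) *
            ((s : ℝ) / 2 * ((x - 1) / 2) ^ (s - 1) * ((x + 1) / 2) ^ (k - s)
              + ((k - s : ℕ) : ℝ) / 2 * ((x - 1) / 2) ^ s * ((x + 1) / 2) ^ (k - s - 1)))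
    = (((k : ℝ) + 1) / 2) * jacobiP 1 1 (k + 1) x := by
  have h := gj_key' k ((x - 1) / 2) ((x + 1) / 2)
  have hx : (x - 1) / 2 + (x + 1) / 2 = x := by ring
  have hw : (x - 1) / 2 * ((x + 1) / 2) = (x ^ 2 - 1) / 4 := by ring
  rw [hx, hw] at h
  unfold jacobiP
  exact h

/-- for `n ≥ 4`, `d/dξ P_n^{(-2,-2)}(ξ) = ((n−3)/2)·P_{n−1}^{(-1,-1)}(ξ)`. -/
theorem deriv_gJacobiM2 (n : ℕ) (hn : 4 ≤ n) (x : ℝ) :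
    deriv (fun ξ : ℝ => gJacobiM2 n ξ) x = (((n : ℝ) - 3) / 2) * gJacobiM1 (n - 1) x := by
  obtain ⟨k, rfl⟩ : ∃ k, n = k + 4 := ⟨n - 4, by omega⟩
  have hfun : (fun ξ : ℝ => gJacobiM2 (k + 4) ξ)
      = fun ξ : ℝ => ((ξ ^ 2 - 1) / 4) ^ 2 * jacobiP 2 2 k ξ := by
    funext ξ
    unfold gJacobiM2
    rw [show k + 4 - 4 = k from by omega]
  have h1 : HasDerivAt (fun ξ : ℝ => ((ξ ^ 2 - 1) / 4) ^ 2)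
      ((2 : ℕ) * ((x ^ 2 - 1) / 4) ^ (2 - 1) * (((2 : ℕ) * x ^ (2 - 1)) / 4)) x :=
    (((hasDerivAt_pow 2 x).sub_const 1).div_const 4).pow 2
  have h2 := gj_hasDerivAt_jacobiP 2 2 k x
  have h := h1.fun_mul h2
  rw [hfun, h.deriv]
  unfold gJacobiM1
  rw [show k + 4 - 1 - 2 = k + 1 from by omega]
  have hn3 : ((k : ℝ) + 4) - 3 = (k : ℝ) + 1 := by ring
  push_cast
  rw [show ((k : ℝ) + 4 - 3) = (k : ℝ) + 1 from by ring]
  linear_combination ((x ^ 2 - 1) / 4) * gj_key k x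
end

section
/- For each pair (m, n) with m, n ≥ 1, the planar vector field χ_{m,n}(ξ₁, ξ₂) = ( φ̃_{m+3}(ξ₁)·ψ_{n+2}(ξ₂), −ψ_{m+2}(ξ₁)·φ̃_{n+3}(ξ₂) ) has zero divergence on (−1,1)², where φ̃ denotes the H²-type basis function built from P^{(-2,-2)}. -/
open scoped BigOperators

/-- abstract reindexing lemma -/
lemma sum_shift_aux (k : ℕ) (A B e T : ℕ → ℝ)
    (h0 : A 0 = e 0) (hk : B k = e (k+1))
    (hmid : ∀ s < k, A (s+1) + B s = e (s+1)) :
    (∑ s ∈ Finset.range (k+1), A s * T s) + (∑ s ∈ Finset.range (k+1), B s * T (s+1))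
      = ∑ s ∈ Finset.range (k+2), e s * T s := by
  rw [Finset.sum_range_succ' (fun s => A s * T s),
      Finset.sum_range_succ (fun s => B s * T (s+1)),
      Finset.sum_range_succ' (fun s => e s * T s),
      Finset.sum_range_succ (fun s => e (s+1) * T (s+1))]
  have : ∑ s ∈ Finset.range k, e (s+1) * T (s+1)
      = ∑ s ∈ Finset.range k, (A (s+1) * T (s+1) + B s * T (s+1)) := by
    refine Finset.sum_congr rfl fun s hs => ?_
    rw [← add_mul, hmid s (Finset.mem_range.mp hs)]
  rw [this, Finset.sum_add_distrib, h0, hk]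
  ring

lemma choose_cast_id (n r : ℕ) (h : r + 1 ≤ n) :
    ((n.choose (r+1) : ℝ)) * (r+1) = (n.choose r : ℝ) * ((n : ℝ) - r) := by
  have := Nat.choose_succ_right_eq n r
  have hnr : (↑(n - r) : ℝ) = (n : ℝ) - r := by
    push_cast [Nat.cast_sub (by omega : r ≤ n)]; ring
  calc ((n.choose (r+1) : ℝ)) * (r+1) = ((n.choose (r+1) * (r+1) : ℕ) : ℝ) := by push_cast; ring
    _ = ((n.choose r * (n - r) : ℕ) : ℝ) := by rw [this]
    _ = (n.choose r : ℝ) * ((n : ℝ) - r) := by push_cast [Nat.cast_sub (by omega : r ≤ n)]; ring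

lemma key_hasDerivAt (k : ℕ) (x : ℝ) :
    HasDerivAt (fun t : ℝ => ((t^2-1)/4)^2 * jacobiP 2 2 k t)
      ((((k:ℝ)+1)/2) * (((x^2-1)/4) * jacobiP 1 1 (k+1) x)) x := by
  have hfun : (fun t : ℝ => ((t^2-1)/4)^2 * jacobiP 2 2 k t)
      = fun t : ℝ => ∑ s ∈ Finset.range (k+1),
          ((Nat.choose (k+2) (k-s) : ℝ) * (Nat.choose (k+2) s : ℝ)) *
            (((t-1)/2)^(s+2) * ((t+1)/2)^((k-s)+2)) := by
    funext t
    rw [jacobiP, Finset.mul_sum]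
    refine Finset.sum_congr rfl fun s hs => ?_
    rw [pow_add, pow_add]
    ring
  rw [hfun]
  have ha : HasDerivAt (fun t : ℝ => (t-1)/2) (1/2) x :=
    ((hasDerivAt_id x).sub_const 1).div_const 2
  have hb : HasDerivAt (fun t : ℝ => (t+1)/2) (1/2) x :=
    ((hasDerivAt_id x).add_const 1).div_const 2
  have H : HasDerivAt (fun t : ℝ => ∑ s ∈ Finset.range (k+1),
          ((Nat.choose (k+2) (k-s) : ℝ) * (Nat.choose (k+2) s : ℝ)) *
            (((t-1)/2)^(s+2) * ((t+1)/2)^((k-s)+2)))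
      (∑ s ∈ Finset.range (k+1),
          ((Nat.choose (k+2) (k-s) : ℝ) * (Nat.choose (k+2) s : ℝ)) *
            ((((s:ℝ)+2) * ((x-1)/2)^(s+1) * (1/2)) * ((x+1)/2)^((k-s)+2)
              + ((x-1)/2)^(s+2) * (((↑(k-s):ℝ)+2) * ((x+1)/2)^((k-s)+1) * (1/2)))) x := by
    apply HasDerivAt.fun_sum
    intro s hs
    have h1 := (ha.fun_pow (s+2)).fun_mul (hb.fun_pow ((k-s)+2))
    have h2 := h1.const_mul ((Nat.choose (k+2) (k-s) : ℝ) * (Nat.choose (k+2) s : ℝ))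
    refine h2.congr_deriv ?_
    push_cast
    simp [Nat.add_sub_cancel]
  convert H using 1
  -- now the sum identity
  set A : ℕ → ℝ := fun s => ((Nat.choose (k+2) (k-s) : ℝ) * (Nat.choose (k+2) s : ℝ)) * (((s:ℝ)+2)/2) with hA
  set B : ℕ → ℝ := fun s => ((Nat.choose (k+2) (k-s) : ℝ) * (Nat.choose (k+2) s : ℝ)) * (((↑(k-s):ℝ)+2)/2) with hB
  set e : ℕ → ℝ := fun s => (((k:ℝ)+1)/2) * ((Nat.choose (k+2) (k+1-s) : ℝ) * (Nat.choose (k+2) s : ℝ)) with he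
  set T : ℕ → ℝ := fun s => ((x-1)/2)^(s+1) * ((x+1)/2)^(k+2-s) with hT
  have h0 : A 0 = e 0 := by
    simp only [hA, he]
    have := choose_cast_id (k+2) (k) (by omega)
    push_cast at this ⊢
    simp only [Nat.sub_zero] at *
    nlinarith [this]
  have hkk : B k = e (k+1) := by
    simp only [hB, he]
    have := choose_cast_id (k+2) (k) (by omega)
    have e1 : k - k = 0 := by omega
    have e2 : k + 1 - (k+1) = 0 := by omega
    rw [e1, e2]
    push_cast at this ⊢
    nlinarith [this]
  have hmid : ∀ s < k, A (s+1) + B s = e (s+1) := by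
    intro s hs
    obtain ⟨r, rfl⟩ : ∃ r, k = s + r + 1 := ⟨k - s - 1, by omega⟩
    simp only [hA, hB, he]
    have e1 : s + r + 1 - (s+1) = r := by omega
    have e2 : s + r + 1 - s = r + 1 := by omega
    have e3 : s + r + 1 + 1 - (s+1) = r + 1 := by omega
    rw [e1, e2, e3]
    have h1 := choose_cast_id (s+r+3) r (by omega)
    have h2 := choose_cast_id (s+r+3) s (by omega)
    push_cast at h1 h2 ⊢
    have hn1 : ((s:ℝ)+r+3) - r = (s:ℝ) + 3 := by ring
    have hn2 : ((s:ℝ)+r+3) - s = (r:ℝ) + 3 := by ring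
    rw [hn1] at h1; rw [hn2] at h2
    have hc1 : (s + r + 1 + 2 : ℕ) = s + r + 3 := by omega
    rw [hc1]
    linear_combination (-(Nat.choose (s+r+3) (s+1) : ℝ)/2) * h1 + (-(Nat.choose (s+r+3) (r+1) : ℝ)/2) * h2
  have main := sum_shift_aux k A B e T h0 hkk hmid
  -- LHS of goal equals RHS of main etc.
  calc (((k:ℝ)+1)/2) * (((x^2-1)/4) * jacobiP 1 1 (k+1) x)
      = ∑ s ∈ Finset.range (k+2), e s * T s := by
        rw [jacobiP, Finset.mul_sum, Finset.mul_sum]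
        refine Finset.sum_congr rfl fun s hs => ?_
        have hs' : s ≤ k + 1 := by have := Finset.mem_range.mp hs; omega
        simp only [he, hT]
        have e4 : k + 2 - s = (k + 1 - s) + 1 := by omega
        rw [e4, pow_succ, pow_succ']
        push_cast
        ring
    _ = (∑ s ∈ Finset.range (k+1), A s * T s) + (∑ s ∈ Finset.range (k+1), B s * T (s+1)) := main.symm
    _ = ∑ s ∈ Finset.range (k+1),
          ((Nat.choose (k+2) (k-s) : ℝ) * (Nat.choose (k+2) s : ℝ)) *
            ((((s:ℝ)+2) * ((x-1)/2)^(s+1) * (1/2)) * ((x+1)/2)^((k-s)+2)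
              + ((x-1)/2)^(s+2) * (((↑(k-s):ℝ)+2) * ((x+1)/2)^((k-s)+1) * (1/2))) := by
        rw [← Finset.sum_add_distrib]
        refine Finset.sum_congr rfl fun s hs => ?_
        have hs' : s ≤ k := by have := Finset.mem_range.mp hs; omega
        simp only [hA, hB, hT]
        have e5 : k + 2 - s = (k - s) + 2 := by omega
        have e6 : k + 2 - (s+1) = (k - s) + 1 := by omega
        rw [e5, e6]
        ring


lemma varphi_hasDerivAt (m : ℕ) (hm : 1 ≤ m) (x : ℝ) :
    HasDerivAt (fun t : ℝ => varphiF (m+3) t) (psiF (m+2) x) x := by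
  obtain ⟨k, rfl⟩ : ∃ k, m = k + 1 := ⟨m - 1, by omega⟩
  have H := (key_hasDerivAt k x).const_mul
      (Real.sqrt (8 * (2 * ((k+1+3 : ℕ) : ℝ) - 3)) / ((((k+1+3:ℕ) : ℝ) - 3) * (((k+1+3:ℕ) : ℝ) - 2)))
  have hfun : (fun t : ℝ => varphiF (k+1+3) t)
      = fun t : ℝ => (Real.sqrt (8 * (2 * ((k+1+3 : ℕ) : ℝ) - 3)) / ((((k+1+3:ℕ) : ℝ) - 3) * (((k+1+3:ℕ) : ℝ) - 2)))
          * (((t^2-1)/4)^2 * jacobiP 2 2 k t) := by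
    funext t
    rw [varphiF, gJacobiM2]
    have e0 : (k + 1 + 3 : ℕ) - 4 = k := by omega
    rw [e0]
  rw [hfun]
  refine H.congr_deriv ?_
  rw [psiF, gJacobiM1]
  have e1 : (k + 1 + 2 : ℕ) - 2 = k + 1 := by omega
  rw [e1]
  have hsqrt : Real.sqrt (8 * (2 * ((k+1+3 : ℕ) : ℝ) - 3))
      = 2 * Real.sqrt (2 * (2 * ((k+1+2 : ℕ) : ℝ) - 1)) := by
    have h8 : (8 : ℝ) * (2 * ((k+1+3 : ℕ) : ℝ) - 3) = 2^2 * (2 * (2 * ((k+1+2 : ℕ) : ℝ) - 1)) := by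
      push_cast; ring
    rw [h8, Real.sqrt_mul (by positivity), Real.sqrt_sq (by norm_num)]
  have hk1 : ((k:ℝ) + 1) ≠ 0 := by positivity
  have hk2 : ((k:ℝ) + 2) ≠ 0 := by positivity
  have c1 : (((k+1+3:ℕ) : ℝ)) - 3 = (k:ℝ) + 1 := by push_cast; ring
  have c2 : (((k+1+3:ℕ) : ℝ)) - 2 = (k:ℝ) + 2 := by push_cast; ring
  have c3 : (((k+1+2:ℕ) : ℝ)) - 1 = (k:ℝ) + 2 := by push_cast; ring
  have hc : (Real.sqrt (8 * (2 * ((k+1+3 : ℕ) : ℝ) - 3)) / ((((k+1+3:ℕ) : ℝ) - 3) * (((k+1+3:ℕ) : ℝ) - 2)))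
      * (((k:ℝ)+1)/2)
      = Real.sqrt (2 * (2 * ((k+1+2 : ℕ) : ℝ) - 1)) / ((((k+1+2:ℕ) : ℝ)) - 1) := by
    rw [hsqrt, c1, c2, c3]
    field_simp
  rw [← hc]
  ring

/-- for `m, n ≥ 1`, the planar vector field
`χ_{m,n}(ξ₁,ξ₂) = (φ̃_{m+3}(ξ₁)ψ_{n+2}(ξ₂), −ψ_{m+2}(ξ₁)φ̃_{n+3}(ξ₂))`
has zero divergence on `(−1,1)²`. -/

theorem chi_div_free (m n : ℕ) (hm : 1 ≤ m) (hn : 1 ≤ n) (ξ₁ ξ₂ : ℝ)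
    (h₁ : ξ₁ ∈ Set.Ioo (-1 : ℝ) 1) (h₂ : ξ₂ ∈ Set.Ioo (-1 : ℝ) 1) :
    deriv (fun t : ℝ => varphiF (m + 3) t * psiF (n + 2) ξ₂) ξ₁ +
      deriv (fun t : ℝ => -(psiF (m + 2) ξ₁ * varphiF (n + 3) t)) ξ₂ = 0 := by
  have H1 := ((varphi_hasDerivAt m hm ξ₁).mul_const (psiF (n + 2) ξ₂)).deriv
  have H2 := (((varphi_hasDerivAt n hn ξ₂).const_mul (psiF (m + 2) ξ₁)).fun_neg).deriv
  rw [H1, H2]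
  ring
end

section
/- With ψ₂(ξ) = (L₂(ξ) − L₀(ξ))/√6 and ψ_{m+2}(ξ) = (1/(2c_{m+1}))·(L_{m+2}(ξ) − L_m(ξ)), the vector H̃ with entries H̃_m = ∫_{−1}^{1} ψ₂(ξ)ψ_{m+2}(ξ) dξ for 1 ≤ m ≤ N−3 satisfies H̃_2 = −√3/(15√7) and H̃_m = 0 for all m ≠ 2. -/
open scoped BigOperators

/-- `c_n = √(2(2n+1))/2`. -/
noncomputable def cConst (n : ℕ) : ℝ := Real.sqrt (2 * (2 * (n : ℝ) + 1)) / 2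

/-- `ψ_{m+2}(ξ) = (1/(2c_{m+1}))·(L_{m+2}(ξ) − L_m(ξ))`. -/
noncomputable def psiL (m : ℕ) (ξ : ℝ) : ℝ :=
  (1 / (2 * cConst (m + 1))) * (legendreP (m + 2) ξ - legendreP m ξ)

/-- `ψ₂(ξ) = (L₂(ξ) − L₀(ξ))/√6`. -/
noncomputable def psi2 (ξ : ℝ) : ℝ := (legendreP 2 ξ - legendreP 0 ξ) / Real.sqrt 6

open Polynomial

noncomputable def QQpoly (m : ℕ) : ℝ[X] := (X - C 1) ^ m * (X + C 1) ^ m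

lemma legendreP_eq_eval (m : ℕ) (x : ℝ) :
    (derivative^[m] (QQpoly m)).eval x = 2 ^ m * m.factorial * legendreP m x := by
  rw [QQpoly, iterate_derivative_mul, legendreP, jacobiP, eval_finset_sum, Finset.mul_sum]
  refine Finset.sum_congr rfl fun k hk => ?_
  have hk' : k ≤ m := Nat.lt_succ_iff.mp (Finset.mem_range.mp hk)
  rw [iterate_derivative_X_sub_pow, iterate_derivative_X_add_pow, Nat.sub_sub_self hk']
  have key : m.choose k * (m.descFactorial k) * (m.descFactorial (m - k)) =
      m.factorial * (m.choose k) * (m.choose k) := by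
    rw [Nat.descFactorial_eq_factorial_mul_choose, Nat.descFactorial_eq_factorial_mul_choose,
      Nat.choose_symm hk', ← Nat.choose_mul_factorial_mul_factorial hk']
    ring
  have ckey : (m.choose k : ℝ) * (m.descFactorial k) * (m.descFactorial (m - k)) =
      (m.factorial : ℝ) * (m.choose k) * (m.choose k) := by exact_mod_cast key
  have h2 : (2:ℝ) ^ m = 2 ^ k * 2 ^ (m - k) := by
    rw [← pow_add, Nat.add_sub_cancel' hk']
  simp only [eval_smul, smul_eq_mul, eval_mul, eval_pow, eval_sub, eval_add, eval_X, eval_one,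
    eval_C, nsmul_eq_mul, Nat.add_zero, Nat.zero_add, add_zero, eval_natCast]
  rw [div_pow, div_pow, h2, Nat.choose_symm hk']
  field_simp
  linear_combination ((x - 1) ^ k * (x + 1) ^ (m - k)) * ckey

lemma vanish (m i : ℕ) (hi : i < m) :
    (derivative^[i] (QQpoly m)).eval 1 = 0 ∧ (derivative^[i] (QQpoly m)).eval (-1) = 0 := by
  rw [QQpoly, iterate_derivative_mul]
  constructor <;>
  · rw [eval_finset_sum]
    apply Finset.sum_eq_zero
    intro k hk
    have hk' : k ≤ i := Nat.lt_succ_iff.mp (Finset.mem_range.mp hk)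
    have h1 : m - (i - k) ≠ 0 := Nat.sub_ne_zero_of_lt (lt_of_le_of_lt (Nat.sub_le i k) hi)
    have h2 : m - k ≠ 0 := Nat.sub_ne_zero_of_lt (lt_of_le_of_lt hk' hi)
    rw [iterate_derivative_X_sub_pow, iterate_derivative_X_add_pow]
    simp [zero_pow h1, zero_pow h2]

lemma poly_ibp (p q : ℝ[X]) :
    (∫ x in (-1:ℝ)..1, p.eval x * (derivative q).eval x) =
      (p * q).eval 1 - (p * q).eval (-1)
        - ∫ x in (-1:ℝ)..1, (derivative p).eval x * q.eval x := by
  have h : (∫ x in (-1:ℝ)..1, (derivative (p * q)).eval x)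
      = (p * q).eval 1 - (p * q).eval (-1) := by
    exact intervalIntegral.integral_eq_sub_of_hasDerivAt (fun x _ => (p * q).hasDerivAt x)
      ((derivative (p * q)).continuous.intervalIntegrable _ _)
  have hi1 : IntervalIntegrable (fun x => (derivative p).eval x * q.eval x)
      MeasureTheory.volume (-1) 1 :=
    ((derivative p).continuous.mul q.continuous).intervalIntegrable _ _
  have hi2 : IntervalIntegrable (fun x => p.eval x * (derivative q).eval x)
      MeasureTheory.volume (-1) 1 :=
    (p.continuous.mul (derivative q).continuous).intervalIntegrable _ _
  simp only [derivative_mul, eval_add, eval_mul] at h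
  rw [intervalIntegral.integral_add hi1 hi2] at h
  simp only [eval_mul]
  linarith

lemma ibp_step (m : ℕ) (k : ℕ) (hk : k ≤ m) (p : ℝ[X]) :
    (∫ x in (-1:ℝ)..1, p.eval x * (derivative^[m] (QQpoly m)).eval x) =
    (-1:ℝ) ^ k * ∫ x in (-1:ℝ)..1,
      (derivative^[k] p).eval x * (derivative^[m - k] (QQpoly m)).eval x := by
  induction k with
  | zero => simp
  | succ k ih =>
    rw [ih (by omega)]
    have hmk : m - k = (m - (k + 1)) + 1 := by omega
    rw [hmk, Function.iterate_succ_apply']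
    rw [poly_ibp (derivative^[k] p) (derivative^[m - (k + 1)] (QQpoly m))]
    have hv := vanish m (m - (k + 1)) (by omega)
    rw [eval_mul, eval_mul, hv.1, hv.2, Function.iterate_succ_apply']
    ring

lemma orth (m : ℕ) (p : ℝ[X]) (hp : p.natDegree < m) :
    (∫ x in (-1:ℝ)..1, p.eval x * legendreP m x) = 0 := by
  have h1 : ∀ x : ℝ, legendreP m x = (derivative^[m] (QQpoly m)).eval x / (2 ^ m * m.factorial) := by
    intro x
    rw [legendreP_eq_eval]
    have : (2:ℝ) ^ m * m.factorial ≠ 0 := by positivity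
    field_simp
  have key : (∫ x in (-1:ℝ)..1, p.eval x * (derivative^[m] (QQpoly m)).eval x) = 0 := by
    rw [ibp_step m m le_rfl p, iterate_derivative_eq_zero hp]
    simp
  simp_rw [h1, ← mul_div_assoc, intervalIntegral.integral_div, key, zero_div]

lemma legendreP_zero' (x : ℝ) : legendreP 0 x = 1 := by
  simp [legendreP, jacobiP]

lemma legendreP_one' (x : ℝ) : legendreP 1 x = x := by
  simp [legendreP, jacobiP, Finset.sum_range_succ]
  ring

lemma legendreP_two' (x : ℝ) : legendreP 2 x = (3 * x ^ 2 - 1) / 2 := by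
  simp [legendreP, jacobiP, Finset.sum_range_succ]
  ring

noncomputable def P2 : ℝ[X] := C (3/2) * X ^ 2 - C (3/2)

lemma P2_eval (x : ℝ) : P2.eval x = legendreP 2 x - legendreP 0 x := by
  simp [P2, legendreP_two', legendreP_zero']
  ring

lemma P2_deg : P2.natDegree ≤ 2 := by
  unfold P2
  compute_degree

lemma legendreP_continuous (n : ℕ) : Continuous (legendreP n) := by
  unfold legendreP jacobiP
  apply continuous_finset_sum
  intro i _
  fun_prop

lemma sqrt614 : Real.sqrt 6 * Real.sqrt 14 = 2 * (Real.sqrt 3 * Real.sqrt 7) := by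
  rw [← Real.sqrt_mul (by norm_num : (0:ℝ) ≤ 6), ← Real.sqrt_mul (by norm_num : (0:ℝ) ≤ 3)]
  rw [show (6:ℝ) * 14 = 4 * 21 by norm_num, Real.sqrt_mul (by norm_num : (0:ℝ) ≤ 4),
    show Real.sqrt 4 = 2 by
      rw [show (4:ℝ) = 2 ^ 2 by norm_num, Real.sqrt_sq (by norm_num : (0:ℝ) ≤ 2)]]
  norm_num

/-- the vector `H̃_m = ∫_{−1}^1 ψ₂ ψ_{m+2} dξ` (for `1 ≤ m ≤ N−3`)
satisfies `H̃_2 = −√3/(15√7)` and `H̃_m = 0` for `m ≠ 2`. -/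
theorem Htilde_entries (N m : ℕ) (hm1 : 1 ≤ m) (hmN : m ≤ N - 3) :
    (∫ ξ in (-1 : ℝ)..1, psi2 ξ * psiL m ξ) =
      if m = 2 then -(Real.sqrt 3 / (15 * Real.sqrt 7)) else 0 := by
  set K : ℝ := 1 / Real.sqrt 6 * (1 / (2 * cConst (m + 1))) with hKdef
  have hfun : ∀ ξ : ℝ, psi2 ξ * psiL m ξ =
      K * (P2.eval ξ * legendreP (m + 2) ξ) - K * (P2.eval ξ * legendreP m ξ) := by
    intro ξ
    rw [psi2, psiL, P2_eval, hKdef]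
    ring
  have hint : ∀ n : ℕ, IntervalIntegrable (fun ξ => P2.eval ξ * legendreP n ξ)
      MeasureTheory.volume (-1) 1 :=
    fun n => (P2.continuous.mul (legendreP_continuous n)).intervalIntegrable _ _
  have h1 : (∫ ξ in (-1:ℝ)..1, P2.eval ξ * legendreP (m + 2) ξ) = 0 :=
    orth (m + 2) P2 (lt_of_le_of_lt P2_deg (by omega))
  have main : (∫ ξ in (-1 : ℝ)..1, psi2 ξ * psiL m ξ)
      = - (K * ∫ ξ in (-1:ℝ)..1, P2.eval ξ * legendreP m ξ) := by
    simp_rw [hfun]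
    rw [intervalIntegral.integral_sub ((hint (m + 2)).const_mul K) ((hint m).const_mul K),
      intervalIntegral.integral_const_mul, intervalIntegral.integral_const_mul, h1]
    ring
  rcases eq_or_ne m 2 with hm | hm
  · subst hm
    rw [if_pos rfl, main]
    have h2 : (∫ ξ in (-1:ℝ)..1, P2.eval ξ * legendreP 2 ξ) = 2 / 5 := by
      have : ∀ ξ : ℝ, P2.eval ξ * legendreP 2 ξ = 9/4 * ξ ^ 4 - 3 * ξ ^ 2 + 3/4 := by
        intro ξ
        simp [P2, legendreP_two']
        ring
      simp_rw [this]
      rw [intervalIntegral.integral_add (by apply IntervalIntegrable.sub <;>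
            exact (by fun_prop : Continuous _).intervalIntegrable _ _)
          ((by fun_prop : Continuous fun _ : ℝ => (3:ℝ)/4).intervalIntegrable _ _),
        intervalIntegral.integral_sub
          ((by fun_prop : Continuous _).intervalIntegrable _ _)
          ((by fun_prop : Continuous _).intervalIntegrable _ _),
        intervalIntegral.integral_const_mul, intervalIntegral.integral_const_mul,
        integral_pow, integral_pow,
        intervalIntegral.integral_const]
      norm_num
    rw [h2, hKdef]
    have hc3 : cConst 3 = Real.sqrt 14 / 2 := by
      rw [cConst]
      norm_num
    rw [hc3]
    have h3 : (0:ℝ) < Real.sqrt 3 := Real.sqrt_pos.mpr (by norm_num)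
    have h7 : (0:ℝ) < Real.sqrt 7 := Real.sqrt_pos.mpr (by norm_num)
    have h6 : (0:ℝ) < Real.sqrt 6 := Real.sqrt_pos.mpr (by norm_num)
    have h14 : (0:ℝ) < Real.sqrt 14 := Real.sqrt_pos.mpr (by norm_num)
    have h33 : Real.sqrt 3 * Real.sqrt 3 = 3 := Real.mul_self_sqrt (by norm_num)
    have h77 : Real.sqrt 7 * Real.sqrt 7 = 7 := Real.mul_self_sqrt (by norm_num)
    field_simp
    nlinarith [sqrt614, h3, h7, h33, h77, mul_pos h3 h7]
  · rw [if_neg hm, main]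
    have h2 : (∫ ξ in (-1:ℝ)..1, P2.eval ξ * legendreP m ξ) = 0 := by
      rcases eq_or_lt_of_le hm1 with h | h
    -- m = 1 or m ≥ 3 (m ≠ 2)
      · -- m = 1
        rw [← h]
        have : ∀ ξ : ℝ, P2.eval ξ * legendreP 1 ξ = 3/2 * ξ ^ 3 - 3/2 * ξ := by
          intro ξ
          simp [P2, legendreP_one']
          ring
        simp_rw [this]
        rw [intervalIntegral.integral_sub
            ((by fun_prop : Continuous _).intervalIntegrable _ _)
            ((by fun_prop : Continuous _).intervalIntegrable _ _),
          intervalIntegral.integral_const_mul, intervalIntegral.integral_const_mul,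
          integral_pow, integral_id]
        norm_num
      · -- m ≥ 3
        have hm3 : 3 ≤ m := by omega
        exact orth m P2 (lt_of_le_of_lt P2_deg (by omega))
    rw [h2]
    ring
end
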